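/- If a finite digraph G has no one-way cycle, then for any reals 0 < α < β < 1, G is (α,β)-proportional: there exist finite sets A_v such that for distinct u, v: u → v iff α·|A_u| < |A_u ∩ A_v| < β·|A_u|. -/

import Mathlib

def HasOneWayCycle {V : Type*} (E : V → V → Prop) : Prop :=
  ∃ (n : ℕ) (v : ℕ → V), 1 ≤ n ∧ v n = v 0 ∧
    ∀ i < n, E (v i) (v (i + 1)) ∧ ¬ E (v (i + 1)) (v i)

namespace Stmt15Aux

open Finset

lemma transGen_chain {V : Type*} {E' : V → V → Prop} {a b : V}
    (h : Relation.TransGen E' a b) :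
    ∃ (n : ℕ) (f : ℕ → V), 1 ≤ n ∧ f 0 = a ∧ f n = b ∧ ∀ i < n, E' (f i) (f (i + 1)) := by
  induction h with
  | @single c h =>
      refine ⟨1, fun i => if i = 0 then a else c, le_refl 1, by simp, by simp, ?_⟩
      intro i hi
      interval_cases i
      simpa using h
  | @tail b c hab hbc ih =>
      obtain ⟨n, f, hn, h0, hb, hE⟩ := ih
      refine ⟨n + 1, fun i => if i ≤ n then f i else c, by omega, by simp [h0], by simp, ?_⟩
      intro i hi
      by_cases hin : i < n
      · have h1 : i ≤ n := by omega
        have h2 : i + 1 ≤ n := by omega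
        simpa [h1, h2] using hE i hin
      · have hieq : i = n := by omega
        subst hieq
        simpa [hb] using hbc



noncomputable def rk {V : Type*} (E' : V → V → Prop) (v : V) : ℕ :=
  {u | Relation.TransGen E' u v}.ncard

lemma rk_lt {V : Type*} [Fintype V] {E' : V → V → Prop}
    (hacyc : ∀ x, ¬ Relation.TransGen E' x x) {u v : V} (huv : E' u v) :
    rk E' u < rk E' v := by
  apply Set.ncard_lt_ncard _ (Set.toFinite _)
  have hsub : {w | Relation.TransGen E' w u} ⊆ {w | Relation.TransGen E' w v} :=
    fun w hw => Relation.TransGen.tail hw huv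
  exact (Set.ssubset_iff_of_subset hsub).2
    ⟨u, Relation.TransGen.single huv, fun h => hacyc u h⟩

lemma rk_le {V : Type*} [Fintype V] (E' : V → V → Prop) (v : V) :
    rk E' v ≤ Fintype.card V := by
  have := Set.ncard_le_ncard (Set.subset_univ {u | Relation.TransGen E' u v}) (Set.toFinite _)
  simpa [rk, Set.ncard_univ] using this



lemma pair_eq {a b c d : ℕ} (h1 : a ⊓ b = c ⊓ d) (h2 : a ⊔ b = c ⊔ d) :
    a = c ∧ b = d ∨ a = d ∧ b = c := by
  omega

abbrev GdT := ℕ ⊕ (ℕ × ℕ × ℕ) ⊕ ℕ × ℕ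
section
variable {V : Type*} [Fintype V] [DecidableEq V]
def coreF (K : V → ℕ) (u : V) : Finset GdT := (range (K u)).image Sum.inl
def blkF (yy : V → V → ℕ) (ι : V → ℕ) (u v : V) : Finset GdT :=
  (range (yy u v)).image fun i => Sum.inr (Sum.inl (min (ι u) (ι v), max (ι u) (ι v), i))
def pvF (pp ι : V → ℕ) (u : V) : Finset GdT :=
  (range (pp u)).image fun i => Sum.inr (Sum.inr (ι u, i))
def AF (K : V → ℕ) (yy : V → V → ℕ) (pp ι : V → ℕ) (u : V) : Finset GdT :=
  coreF K u ∪ pvF pp ι u ∪ (univ.erase u).biUnion (blkF yy ι u)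

lemma inter_AF (K : V → ℕ) (yy : V → V → ℕ) (pp ι : V → ℕ)
    (ysymm : ∀ u v, yy u v = yy v u) (hι : Function.Injective ι)
    {u v : V} (huv : u ≠ v) :
    AF K yy pp ι u ∩ AF K yy pp ι v
      = (range (min (K u) (K v))).image Sum.inl ∪ blkF yy ι u v := by
  ext x
  simp only [mem_inter, AF, mem_union, coreF, pvF, blkF, mem_biUnion, mem_image,
    mem_range, mem_erase, mem_univ, and_true]
  rcases x with i | ⟨⟨a, b, j⟩ | ⟨a, j⟩⟩
  · simp only [Sum.inl.injEq, reduceCtorEq, exists_false, and_false, false_and,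
      exists_const, or_false, exists_eq_right]
    exact lt_inf_iff.symm
  · simp only [reduceCtorEq, Sum.inr.injEq, Sum.inl.injEq, Prod.mk.injEq, exists_false,
      false_or, or_false, and_false, exists_const]
    constructor
    · rintro ⟨⟨w, hw, i, hi, e1, e2, rfl⟩, ⟨w', hw', i', hi', f1, f2, hij⟩⟩
      rcases pair_eq (e1.trans f1.symm) (e2.trans f2.symm) with ⟨ha, hb⟩ | ⟨ha, hb⟩
      · exact absurd (hι ha) huv
      · have hwv : w = v := hι hb
        subst hwv
        exact ⟨i, hi, e1, e2, rfl⟩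
    · rintro ⟨i, hi, e1, e2, rfl⟩
      exact ⟨⟨v, huv.symm, i, hi, e1, e2, rfl⟩,
        ⟨u, huv, i, by rw [ysymm]; exact hi, by rwa [inf_comm], by rwa [sup_comm], rfl⟩⟩
  · simp only [reduceCtorEq, Sum.inr.injEq, Prod.mk.injEq, exists_false, false_or,
      or_false, and_false, exists_const, iff_false, not_and]
    rintro ⟨i, hi, e, rfl⟩ ⟨i', hi', e', hij⟩
    exact huv (hι (e.trans e'.symm))

omit [Fintype V] [DecidableEq V] in
lemma card_blkF (yy : V → V → ℕ) (ι : V → ℕ) (u v : V) :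
    (blkF yy ι u v).card = yy u v := by
  rw [blkF, Finset.card_image_of_injective, Finset.card_range]
  intro i j h; simpa using h

lemma blk_disj (yy : V → V → ℕ) {ι : V → ℕ} (hι : Function.Injective ι)
    {u v w : V} (hvw : v ≠ w) (hwu : w ≠ u) :
    Disjoint (blkF yy ι u v) (blkF yy ι u w) := by
  rw [Finset.disjoint_left]
  intro x hx hx'
  simp only [blkF, mem_image, mem_range] at hx hx'
  obtain ⟨i, hi, rfl⟩ := hx
  obtain ⟨j, hj, h⟩ := hx'
  simp only [Sum.inr.injEq, Sum.inl.injEq, Prod.mk.injEq] at h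
  obtain ⟨h1, h2, h3⟩ := h
  rcases pair_eq h1 h2 with ⟨ha, hb⟩ | ⟨ha, hb⟩ <;>
    first
      | exact hvw (hι hb).symm | exact hvw (hι hb) | exact hvw (hι ha) | exact hvw (hι ha).symm
      | exact hwu (hι ha).symm | exact hwu (hι ha) | exact hwu (hι hb) | exact hwu (hι hb).symm

lemma card_AF (K : V → ℕ) (yy : V → V → ℕ) (pp ι : V → ℕ)
    (hι : Function.Injective ι) (u : V) :
    (AF K yy pp ι u).card = K u + pp u + ∑ v ∈ univ.erase u, yy u v := by
  have hd1 : Disjoint (coreF K u) (pvF pp ι u) := by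
    rw [Finset.disjoint_left]
    intro x hx hx'
    simp only [coreF, mem_image, mem_range] at hx
    simp only [pvF, mem_image, mem_range] at hx'
    obtain ⟨i, hi, rfl⟩ := hx
    obtain ⟨j, hj, h⟩ := hx'
    exact absurd h (by simp)
  have hd2 : Disjoint (coreF K u ∪ pvF pp ι u) ((univ.erase u).biUnion (blkF yy ι u)) := by
    rw [Finset.disjoint_left]
    intro x hx hx'
    simp only [mem_biUnion, blkF, mem_image, mem_range] at hx'
    obtain ⟨v, hv, j, hj, hxe⟩ := hx'
    subst hxe
    simp only [mem_union, coreF, pvF, mem_image, mem_range] at hx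
    rcases hx with ⟨i, hi, h⟩ | ⟨i, hi, h⟩ <;> exact absurd h (by simp)
  have hb : ((univ.erase u).biUnion (blkF yy ι u)).card = ∑ v ∈ univ.erase u, yy u v := by
    rw [Finset.card_biUnion]
    · exact Finset.sum_congr rfl fun v _ => card_blkF yy ι u v
    · intro v hv w hw hvw
      exact blk_disj yy hι hvw (mem_erase.1 hw).1
  rw [AF, Finset.card_union_of_disjoint hd2, Finset.card_union_of_disjoint hd1, hb,
    coreF, pvF, Finset.card_image_of_injective _ Sum.inl_injective,
    Finset.card_image_of_injective, Finset.card_range, Finset.card_range]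
  intro i j h; simpa using h


lemma realize (K : V → ℕ) (yy : V → V → ℕ) (ysymm : ∀ u v, yy u v = yy v u)
    (ι : V → ℕ) (hι : Function.Injective ι) (N : V → ℕ)
    (hsize : ∀ u, K u + ∑ v ∈ univ.erase u, yy u v ≤ N u) :
    ∃ A : V → Finset ℕ, (∀ u, (A u).card = N u) ∧
      ∀ u v, u ≠ v → (A u ∩ A v).card = min (K u) (K v) + yy u v := by
  set pp : V → ℕ := fun u => N u - (K u + ∑ v ∈ univ.erase u, yy u v) with hpp
  have hppe : ∀ u, K u + pp u + ∑ v ∈ univ.erase u, yy u v = N u := by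
    intro u; have := hsize u; simp only [hpp]; omega
  let emb : GdT ↪ ℕ := ⟨Encodable.encode, Encodable.encode_injective⟩
  refine ⟨fun u => (AF K yy pp ι u).map emb, ?_, ?_⟩
  · intro u
    rw [Finset.card_map, card_AF K yy pp ι hι u, hppe]
  · intro u v huv
    rw [← Finset.map_inter, Finset.card_map, inter_AF K yy pp ι ysymm hι huv,
      Finset.card_union_of_disjoint, card_blkF,
      Finset.card_image_of_injective _ Sum.inl_injective, Finset.card_range]
    rw [Finset.disjoint_left]
    rintro x hx hx'
    simp only [blkF, mem_image, mem_range] at hx hx'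
    obtain ⟨i, hi, rfl⟩ := hx
    obtain ⟨i', hi', h⟩ := hx'
    simp at h

end

end Stmt15Aux

open Finset Stmt15Aux in
/-- A finite digraph with no one-way cycle is (α,β)-proportional for all 0 < α < β < 1. -/
theorem stmt_15 {V : Type*} [Fintype V] (E : V → V → Prop)
    (hirr : Irreflexive E) (hnc : ¬ HasOneWayCycle E)
    (α β : ℝ) (hα : 0 < α) (hαβ : α < β) (hβ : β < 1) :
    ∃ A : V → Finset ℕ, ∀ u v : V, u ≠ v →
      (E u v ↔
        (α * (A u).card < ((A u ∩ A v).card : ℝ) ∧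
          ((A u ∩ A v).card : ℝ) < β * (A u).card)) := by
  classical
  set k := Fintype.card V with hk
  set E' : V → V → Prop := fun u v => E u v ∧ ¬ E v u with hE'
  have hacyc : ∀ x, ¬ Relation.TransGen E' x x := by
    intro x hx
    obtain ⟨n, f, hn, h0, hb, hEc⟩ := transGen_chain hx
    exact hnc ⟨n, f, hn, by rw [hb, h0], fun i hi => hEc i hi⟩
  set r : V → ℕ := rk E' with hrdef
  have hrlt : ∀ {u v : V}, E u v → ¬ E v u → r u < r v :=
    fun {u v} huv hvu => rk_lt hacyc ⟨huv, hvu⟩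
  have hrle : ∀ v, r v ≤ k := fun v => rk_le E' v
  set ι : V → ℕ := fun v => ((Fintype.equivFin V) v : ℕ) with hι_def
  have hι : Function.Injective ι := by
    intro a b h
    exact (Fintype.equivFin V).injective (Fin.val_injective h)
  -- numeric parameters
  set B : ℕ := ⌈(2/α)⌉₊ with hBdef
  have hαB : 2 ≤ α * B := by
    have h := Nat.le_ceil (2/α)
    rw [← hBdef] at h
    have := (div_le_iff₀ hα).1 h
    linarith
  set M : ℕ := ⌈(α*(B:ℝ)*k+1)/(β-α)⌉₊ + ⌈((k:ℝ)*(α*(B:ℝ)*k+2))/(1-α)⌉₊ + 1 with hMdef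
  have hba : (0:ℝ) < β - α := by linarith
  have h1α : (0:ℝ) < 1 - α := by linarith
  have hM1 : α*(B:ℝ)*k + 1 < (β-α) * M := by
    have h := Nat.le_ceil ((α*(B:ℝ)*k+1)/(β-α))
    have h2 : (0:ℝ) ≤ (⌈((k:ℝ)*(α*(B:ℝ)*k+2))/(1-α)⌉₊ : ℝ) := Nat.cast_nonneg _
    have hlt : (α*(B:ℝ)*k+1)/(β-α) < (M:ℝ) := by
      rw [hMdef]; push_cast; linarith
    have := (div_lt_iff₀ hba).1 hlt
    linarith
  have hM2 : (k:ℝ)*(α*(B:ℝ)*k+2) ≤ (1-α) * M := by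
    have h := Nat.le_ceil (((k:ℝ)*(α*(B:ℝ)*k+2))/(1-α))
    have h2 : (0:ℝ) ≤ (⌈(α*(B:ℝ)*k+1)/(β-α)⌉₊ : ℝ) := Nat.cast_nonneg _
    have hle : ((k:ℝ)*(α*(B:ℝ)*k+2))/(1-α) ≤ (M:ℝ) := by
      rw [hMdef]; push_cast; linarith
    have := (div_le_iff₀ h1α).1 hle
    linarith
  -- sizes
  set N : V → ℕ := fun u => M + B * r u with hNdef
  have hNM : ∀ u, M ≤ N u := fun u => Nat.le_add_right _ _
  have hNMr : ∀ u, (M:ℝ) ≤ (N u : ℝ) := fun u => by exact_mod_cast hNM u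
  have hNub : ∀ u, N u ≤ M + B * k := by
    intro u
    exact Nat.add_le_add_left (Nat.mul_le_mul_left _ (hrle u)) _
  have hNubr : ∀ u, (N u : ℝ) ≤ (M:ℝ) + B * k := by
    intro u; exact_mod_cast hNub u
  set K : V → ℕ := fun u => ⌊α * (N u : ℝ)⌋₊ with hKdef
  have hKle : ∀ w, (K w : ℝ) ≤ α * N w := by
    intro w; exact Nat.floor_le (by positivity)
  have hKgt : ∀ w, α * N w < K w + 1 := fun w => Nat.lt_floor_add_one _
  have hKub : ∀ w, (K w : ℝ) ≤ α * M + α * B * k := by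
    intro w
    calc (K w : ℝ) ≤ α * N w := hKle w
    _ ≤ α * ((M:ℝ) + B * k) := mul_le_mul_of_nonneg_left (hNubr w) hα.le
    _ = α * M + α * B * k := by ring
  have hKlb : ∀ w, α * M - 1 ≤ (K w : ℝ) := by
    intro w
    have h1 : α * (M:ℝ) ≤ α * N w := mul_le_mul_of_nonneg_left (hNMr w) hα.le
    have := hKgt w
    linarith
  -- intersection sizes
  set s : V → V → ℕ := fun u v =>
    if E u v ∧ E v u then max (K u) (K v) + 1
    else if E u v then K v
    else if E v u then K u
    else min (K u) (K v) with hsdef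
  have hs_tt : ∀ u v, E u v → E v u → s u v = max (K u) (K v) + 1 := by
    intro u v h1 h2; rw [hsdef]; simp [h1, h2]
  have hs_tf : ∀ u v, E u v → ¬ E v u → s u v = K v := by
    intro u v h1 h2; rw [hsdef]; simp [h1, h2]
  have hs_ft : ∀ u v, ¬ E u v → E v u → s u v = K u := by
    intro u v h1 h2; rw [hsdef]; simp [h1, h2]
  have hs_ff : ∀ u v, ¬ E u v → ¬ E v u → s u v = min (K u) (K v) := by
    intro u v h1 h2; rw [hsdef]; simp [h1, h2]
  have hs_symm : ∀ u v, s u v = s v u := by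
    intro u v
    by_cases h1 : E u v <;> by_cases h2 : E v u
    · rw [hs_tt u v h1 h2, hs_tt v u h2 h1, max_comm]
    · rw [hs_tf u v h1 h2, hs_ft v u h2 h1]
    · rw [hs_ft u v h1 h2, hs_tf v u h2 h1]
    · rw [hs_ff u v h1 h2, hs_ff v u h2 h1, min_comm]
  have hmin_le_s : ∀ u v, min (K u) (K v) ≤ s u v := by
    intro u v
    by_cases h1 : E u v <;> by_cases h2 : E v u
    · rw [hs_tt u v h1 h2]; exact le_trans (min_le_max) (Nat.le_succ _)
    · rw [hs_tf u v h1 h2]; exact min_le_right _ _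
    · rw [hs_ft u v h1 h2]; exact min_le_left _ _
    · rw [hs_ff u v h1 h2]
  have hs_le : ∀ u v, s u v ≤ max (K u) (K v) + 1 := by
    intro u v
    by_cases h1 : E u v <;> by_cases h2 : E v u
    · rw [hs_tt u v h1 h2]
    · rw [hs_tf u v h1 h2]; exact le_trans (le_max_right _ _) (Nat.le_succ _)
    · rw [hs_ft u v h1 h2]; exact le_trans (le_max_left _ _) (Nat.le_succ _)
    · rw [hs_ff u v h1 h2]; exact le_trans (min_le_max) (Nat.le_succ _)
  set yy : V → V → ℕ := fun u v => s u v - min (K u) (K v) with hyydef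
  have hyy_symm : ∀ u v, yy u v = yy v u := by
    intro u v; rw [hyydef]; simp only
    rw [hs_symm, min_comm]
  have hyy_ub : ∀ u v, (yy u v : ℝ) ≤ α * B * k + 2 := by
    intro u v
    have hcast : (yy u v : ℝ) = (s u v : ℝ) - (min (K u) (K v) : ℝ) := by
      rw [hyydef]; push_cast [Nat.cast_sub (hmin_le_s u v)]; ring
    have h1 : (s u v : ℝ) ≤ (max (K u) (K v) : ℝ) + 1 := by
      exact_mod_cast hs_le u v
    have h2 : ((K u : ℝ) ⊔ (K v : ℝ)) ≤ α * M + α * B * k := sup_le (hKub u) (hKub v)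
    have h3 : α * M - 1 ≤ ((K u : ℝ) ⊓ (K v : ℝ)) := le_inf (hKlb u) (hKlb v)
    linarith
  have hsize : ∀ u, K u + ∑ v ∈ univ.erase u, yy u v ≤ N u := by
    intro u
    have hsum : ((∑ v ∈ univ.erase u, yy u v : ℕ) : ℝ) ≤ (k:ℝ) * (α * B * k + 2) := by
      push_cast
      calc ∑ v ∈ univ.erase u, (yy u v : ℝ)
          ≤ ∑ v ∈ univ.erase u, (α * B * k + 2) :=
            Finset.sum_le_sum fun v _ => hyy_ub u v
        _ = (univ.erase u).card * (α * B * k + 2) := by rw [Finset.sum_const]; ring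
        _ ≤ (k:ℝ) * (α * B * k + 2) := by
            apply mul_le_mul_of_nonneg_right _ (by positivity)
            have : (univ.erase u).card ≤ k := le_trans (Finset.card_erase_le) (le_of_eq rfl)
            exact_mod_cast this
    have hreal : ((K u + ∑ v ∈ univ.erase u, yy u v : ℕ) : ℝ) ≤ (N u : ℝ) := by
      push_cast
      have h1 := hKle u
      have h2 : (1 - α) * (M:ℝ) ≤ (1 - α) * N u := mul_le_mul_of_nonneg_left (hNMr u) h1α.le
      push_cast at hsum
      linarith
    exact_mod_cast hreal
  obtain ⟨A, hcard, hinter⟩ := realize K yy hyy_symm ι hι N hsize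
  have hinter' : ∀ u v, u ≠ v → (A u ∩ A v).card = s u v := by
    intro u v huv
    rw [hinter u v huv, hyydef]
    simp only
    have := hmin_le_s u v
    omega
  refine ⟨A, ?_⟩
  intro u v huv
  rw [hcard u, hinter' u v huv]
  -- common facts
  have hupper : (K v : ℝ) < β * N u ∧ (K u : ℝ) < β * N u ∧ ((K u:ℝ) ⊔ (K v:ℝ)) + 1 < β * N u := by
    have h2 : (β - α) * (M:ℝ) ≤ (β - α) * N u := mul_le_mul_of_nonneg_left (hNMr u) hba.le
    have h3 := hKub u
    have h4 := hKub v
    have h5 : α * (M:ℝ) ≤ α * N u := mul_le_mul_of_nonneg_left (hNMr u) hα.le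
    refine ⟨by linarith, by linarith, ?_⟩
    have hm : ((K u:ℝ) ⊔ (K v:ℝ)) ≤ α * M + α * B * k := sup_le h3 h4
    linarith
  by_cases h1 : E u v <;> by_cases h2 : E v u
  · -- mutual edge
    rw [hs_tt u v h1 h2]
    simp only [h1, true_iff]
    constructor
    · have hflo : α * (N u:ℝ) < K u + 1 := hKgt u
      push_cast [Nat.cast_max]
      have hsl : (K u : ℝ) ≤ (K u : ℝ) ⊔ (K v : ℝ) := le_sup_left
      linarith
    · push_cast [Nat.cast_max]
      exact hupper.2.2
  · -- one-way u → v
    rw [hs_tf u v h1 h2]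
    simp only [h1, true_iff]
    have hrv : r u < r v := hrlt h1 h2
    have hNB : N u + B ≤ N v := by
      have hr1 : r u + 1 ≤ r v := hrv
      have hr2 : B * (r u + 1) ≤ B * r v := Nat.mul_le_mul_left _ hr1
      have hr3 : B * (r u + 1) = B * r u + B := by ring
      rw [hNdef]; simp only; omega
    have hNBr : (N u : ℝ) + B ≤ (N v : ℝ) := by exact_mod_cast hNB
    constructor
    · have hflo : α * (N v:ℝ) < K v + 1 := hKgt v
      have hmul : α * ((N u:ℝ) + B) ≤ α * N v := mul_le_mul_of_nonneg_left hNBr hα.le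
      have : α * ((N u:ℝ) + B) = α * N u + α * B := by ring
      linarith
    · exact hupper.1
  · -- one-way v → u : not an edge u → v
    rw [hs_ft u v h1 h2]
    simp only [h1, false_iff, not_and, not_lt]
    intro hc
    exact absurd hc (not_lt.2 (hKle u))
  · -- non-edge
    rw [hs_ff u v h1 h2]
    simp only [h1, false_iff, not_and, not_lt]
    intro hc
    exfalso
    have hle : ((K u ⊓ K v : ℕ) : ℝ) ≤ (K u : ℝ) := Nat.cast_le.2 inf_le_left
    have := hKle u
    linarith
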